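/- arXiv:2312.03197 — 9 statements merged into one kernel-verified Lean document; each statement's English description precedes it below -/
import Mathlib

section
/- Let (X,τ) be a topological space, A ⊆ X, and for each x ∈ A \ interior(A) let U_x be an open set with x ∈ U_x (a neighbourhood assignment). Let I_A be the ideal generated by {U_x \ A : x ∈ A \ interior(A)}, i.e. S ∈ I_A iff there is a finite set F ⊆ A \ interior(A) with S ⊆ ⋃_{x∈F} (U_x \ A). Then A is open in the topology τ* on X generated by the family {V \ I : V open in τ, I ∈ I_A}. -/
open TopologicalSpace Set Topology

/-- The ideal generated by the sets `U x \ A` for `x ∈ A \ interior A`: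
`S` belongs to it iff `S` is contained in a finite union of such sets. -/
def genIdeal {X : Type*} [TopologicalSpace X] (A : Set X) (U : X → Set X) : Set (Set X) :=
  {S | ∃ F : Finset X, ↑F ⊆ A \ interior A ∧ S ⊆ ⋃ x ∈ F, U x \ A}

/-- The topology `τ*` generated by `{V \ I : V open, I in the ideal}`. -/
def starTop {X : Type*} [TopologicalSpace X] (I : Set (Set X)) : TopologicalSpace X :=
  generateFrom {s | ∃ V J, IsOpen V ∧ J ∈ I ∧ s = V \ J}

theorem stmt0 {X : Type*} [TopologicalSpace X] (A : Set X) (U : X → Set X)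
    (hUopen : ∀ x ∈ A \ interior A, IsOpen (U x))
    (hUmem : ∀ x ∈ A \ interior A, x ∈ U x) :
    IsOpen[starTop (genIdeal A U)] A := by
  have hA : A = interior A ∪ ⋃ x ∈ A \ interior A, (U x \ (U x \ A)) := by
    apply Subset.antisymm
    · intro x hx
      by_cases h : x ∈ interior A
      · exact Or.inl h
      · refine Or.inr (mem_biUnion ⟨hx, h⟩ ⟨hUmem x ⟨hx, h⟩, fun h' => h'.2 hx⟩)
    · rintro x (hx | hx)
      · exact interior_subset hx
      · obtain ⟨y, hy, hxy⟩ := mem_iUnion₂.1 hx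
        by_contra hxA
        exact hxy.2 ⟨hxy.1, hxA⟩
  set g : Set (Set X) := {s | ∃ V J, IsOpen V ∧ J ∈ genIdeal A U ∧ s = V \ J} with hg
  have h1 : TopologicalSpace.GenerateOpen g (interior A) :=
    TopologicalSpace.GenerateOpen.basic _ ⟨interior A, ∅, isOpen_interior, ⟨∅, by simp⟩, by simp⟩
  have h2 : TopologicalSpace.GenerateOpen g (⋃ x ∈ A \ interior A, (U x \ (U x \ A))) := by
    apply TopologicalSpace.GenerateOpen.sUnion
    rintro s hs
    simp only [mem_image, mem_range] at hs
    -- s is of form ⋃ (h : x ∈ A \ interior A), U x \ (U x \ A)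
    obtain ⟨x, rfl⟩ := hs
    by_cases hx : x ∈ A \ interior A
    · have : ⋃ (_ : x ∈ A \ interior A), U x \ (U x \ A) = U x \ (U x \ A) := by
        simp [hx]
      rw [this]
      exact TopologicalSpace.GenerateOpen.basic _
        ⟨U x, U x \ A, hUopen x hx, ⟨{x}, by simpa using hx, by simp⟩, rfl⟩
    · have : ⋃ (_ : x ∈ A \ interior A), U x \ (U x \ A) = ∅ := by simp [hx]
      rw [this]
      exact TopologicalSpace.GenerateOpen.basic _ ⟨∅, ∅, isOpen_empty, ⟨∅, by simp⟩, by simp⟩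
  have h3 : TopologicalSpace.GenerateOpen g
      (⋃₀ {interior A, ⋃ x ∈ A \ interior A, (U x \ (U x \ A))}) := by
    apply TopologicalSpace.GenerateOpen.sUnion
    rintro s (rfl | rfl)
    · exact h1
    · exact h2
  rw [Set.sUnion_pair, ← hA] at h3
  exact h3
end

section
/- Let (X,τ) be a T₁ topological space and A ⊆ X a set that is not open in τ. For every neighbourhood assignment x ↦ U_x (x ∈ A \ interior(A), U_x open, x ∈ U_x) with generated ideal I_A, there exists another neighbourhood assignment x ↦ Ũ_x (Ũ_x open, x ∈ Ũ_x) whose generated ideal Ĩ_A is a strict subset of I_A, and A is open in the topology generated by {V \ I : V open in τ, I ∈ Ĩ_A}. Consequently there is no minimal ideal of this form making A open in the induced topology. -/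
open TopologicalSpace Set Topology

theorem stmt4 {X : Type*} [TopologicalSpace X] [T1Space X] (A : Set X) (hA : ¬ IsOpen A)
    (U : X → Set X)
    (hUopen : ∀ x ∈ A \ interior A, IsOpen (U x))
    (hUmem : ∀ x ∈ A \ interior A, x ∈ U x) :
    ∃ U' : X → Set X,
      (∀ x ∈ A \ interior A, IsOpen (U' x)) ∧
      (∀ x ∈ A \ interior A, x ∈ U' x) ∧
      genIdeal A U' ⊂ genIdeal A U ∧
      IsOpen[starTop (genIdeal A U')] A := by
  -- A \ interior A is nonempty
  have hne : (A \ interior A).Nonempty := by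
    apply nonempty_iff_ne_empty.mpr
    intro h
    have h1 : A ⊆ interior A := diff_eq_empty.mp h
    have : interior A = A := interior_subset.antisymm h1
    exact hA (this ▸ isOpen_interior)
  obtain ⟨x₀, hx₀⟩ := hne
  -- pick y ∈ U x₀ \ A
  have hyne : (U x₀ \ A).Nonempty := by
    apply nonempty_iff_ne_empty.mpr
    intro h
    have hsub : U x₀ ⊆ A := diff_eq_empty.mp h
    exact hx₀.2 (mem_interior.mpr ⟨U x₀, hsub, hUopen x₀ hx₀, hUmem x₀ hx₀⟩)
  obtain ⟨y, hyU, hyA⟩ := hyne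
  set U' : X → Set X := fun x => U x \ {y} with hU'
  refine ⟨U', ?_, ?_, ?_, ?_⟩
  · intro x hx
    exact (hUopen x hx).sdiff isClosed_singleton
  · intro x hx
    exact ⟨hUmem x hx, fun h => hyA (mem_singleton_iff.mp h ▸ hx.1)⟩
  · constructor
    · rintro S ⟨F, hF, hS⟩
      refine ⟨F, hF, hS.trans ?_⟩
      exact iUnion₂_mono fun x _ => diff_subset_diff_left diff_subset
    · intro hcont
      have hy : ({y} : Set X) ∈ genIdeal A U := by
        refine ⟨{x₀}, by simpa using hx₀, ?_⟩
        simp only [Finset.mem_singleton, iUnion_iUnion_eq_left]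
        exact singleton_subset_iff.mpr ⟨hyU, hyA⟩
      obtain ⟨F, hF, hS⟩ := hcont hy
      have := hS (mem_singleton y)
      rw [mem_iUnion₂] at this
      obtain ⟨x, hxF, hmem⟩ := this
      exact hmem.1.2 rfl
  · -- A is open in starTop
    have hSmem1 : interior A \ (∅ : Set X) ∈
        {s | ∃ V J, IsOpen V ∧ J ∈ genIdeal A U' ∧ s = V \ J} :=
      ⟨interior A, ∅, isOpen_interior, ⟨∅, by simp⟩, rfl⟩
    have hSmem2 : ∀ x ∈ A \ interior A, U' x \ (U' x \ A) ∈
        {s | ∃ V J, IsOpen V ∧ J ∈ genIdeal A U' ∧ s = V \ J} := by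
      intro x hx
      refine ⟨U' x, U' x \ A, (hUopen x hx).sdiff isClosed_singleton,
        ⟨{x}, by simpa using hx, ?_⟩, rfl⟩
      simp only [Finset.mem_singleton, iUnion_iUnion_eq_left]
      exact Subset.rfl
    have hA_eq : A = (interior A \ ∅) ∪ ⋃ x ∈ A \ interior A, (U' x \ (U' x \ A)) := by
      ext a
      constructor
      · intro ha
        by_cases hai : a ∈ interior A
        · exact Or.inl ⟨hai, notMem_empty a⟩
        · refine Or.inr (mem_iUnion₂.mpr ⟨a, ⟨ha, hai⟩, ?_⟩)
          have haU : a ∈ U' a :=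
            ⟨hUmem a ⟨ha, hai⟩, fun h => hyA (mem_singleton_iff.mp h ▸ ha)⟩
          exact ⟨haU, fun h => h.2 ha⟩
      · rintro (h | h)
        · exact interior_subset h.1
        · obtain ⟨x, hx, h1, h2⟩ := mem_iUnion₂.mp h
          by_contra ha
          exact h2 ⟨h1, ha⟩
    have key : IsOpen[starTop (genIdeal A U')]
        ((interior A \ ∅) ∪ ⋃ x ∈ A \ interior A, (U' x \ (U' x \ A))) := by
      letI : TopologicalSpace X := starTop (genIdeal A U')
      exact IsOpen.union (isOpen_generateFrom_of_mem hSmem1)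
        (isOpen_biUnion fun x hx => isOpen_generateFrom_of_mem (hSmem2 x hx))
    rwa [← hA_eq] at key
end

section
/- Let (X,τ) be a topological space, A ⊆ X a dense subset of (X,τ), and for each x ∈ A \ interior(A) let U_x be an open set with x ∈ U_x; let I_A be the ideal generated by {U_x \ A : x ∈ A \ interior(A)}, and let τ* be the topology generated by {V \ I : V ∈ τ, I ∈ I_A}. Then the semiregularization of τ equals the semiregularization of τ*, i.e. the topology generated by the regular open sets of τ equals the topology generated by the regular open sets of τ*. -/
open TopologicalSpace Set Topology

/-- The semiregularization of a topology: the topology generated by its regular open sets. -/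
def semireg {X : Type*} (t : TopologicalSpace X) : TopologicalSpace X :=
  generateFrom {W : Set X | W = @interior X t (@closure X t W)}

section Wrappers

variable {Y : Type*} (τ : TopologicalSpace Y)

lemma mem_closure_iff' {x : Y} {s : Set Y} :
    x ∈ @closure Y τ s ↔ ∀ o, IsOpen[τ] o → x ∈ o → (o ∩ s).Nonempty := by
  letI := τ; exact mem_closure_iff

lemma closure_minimal' {s C : Set Y} (h₁ : s ⊆ C) (h₂ : IsClosed[τ] C) :
    @closure Y τ s ⊆ C := by
  letI := τ; exact closure_minimal h₁ h₂

lemma interior_maximal' {s V : Set Y} (h₁ : V ⊆ s) (h₂ : IsOpen[τ] V) :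
    V ⊆ @interior Y τ s := by
  letI := τ; exact interior_maximal h₁ h₂

lemma interior_subset' {s : Set Y} : @interior Y τ s ⊆ s := by
  letI := τ; exact interior_subset

lemma subset_closure' {s : Set Y} : s ⊆ @closure Y τ s := by
  letI := τ; exact subset_closure

lemma isOpen_interior' {s : Set Y} : IsOpen[τ] (@interior Y τ s) := by
  letI := τ; exact isOpen_interior

lemma isClosed_closure' {s : Set Y} : IsClosed[τ] (@closure Y τ s) := by
  letI := τ; exact isClosed_closure

lemma isOpen_inter' {s u : Set Y} (hs : IsOpen[τ] s) (hu : IsOpen[τ] u) :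
    IsOpen[τ] (s ∩ u) := by
  letI := τ; exact IsOpen.inter hs hu

lemma isClosed_of_compl' {C : Set Y} (h : IsOpen[τ] Cᶜ) : IsClosed[τ] C := by
  letI := τ; exact ⟨h⟩

end Wrappers

section Aux

variable {X : Type*} [t : TopologicalSpace X] {A : Set X} {U : X → Set X}

lemma genIdeal_disj {J : Set X} (hJ : J ∈ genIdeal A U) : Disjoint J A := by
  obtain ⟨F, -, hsub⟩ := hJ
  refine Set.disjoint_left.2 fun x hx hxA => ?_
  obtain ⟨s, ⟨y, rfl⟩, hs⟩ := hsub hx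
  simp only [Set.mem_iUnion, Set.mem_diff] at hs
  exact hs.2.2 hxA

lemma genIdeal_empty : (∅ : Set X) ∈ genIdeal A U :=
  ⟨∅, by simp, by simp⟩

lemma genIdeal_union {J J' : Set X} (hJ : J ∈ genIdeal A U) (hJ' : J' ∈ genIdeal A U) :
    J ∪ J' ∈ genIdeal A U := by
  classical
  obtain ⟨F, hF, hsub⟩ := hJ
  obtain ⟨F', hF', hsub'⟩ := hJ'
  refine ⟨F ∪ F', ?_, ?_⟩
  · intro x hx
    simp only [Finset.coe_union, Set.mem_union] at hx
    exact hx.elim (fun h => hF h) (fun h => hF' h)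
  · rw [Finset.set_biUnion_union]
    exact Set.union_subset (hsub.trans Set.subset_union_left)
      (hsub'.trans Set.subset_union_right)

/-- Every `starTop`-open set contains a basic set `V \ J` around each of its points. -/
lemma star_basis {G : Set X} (hG : IsOpen[starTop (genIdeal A U)] G) :
    ∀ x ∈ G, ∃ V J, IsOpen V ∧ J ∈ genIdeal A U ∧ x ∈ V \ J ∧ V \ J ⊆ G := by
  induction hG with
  | basic s hs =>
      obtain ⟨V, J, hV, hJ, rfl⟩ := hs
      exact fun x hx => ⟨V, J, hV, hJ, hx, Set.Subset.rfl⟩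
  | univ => exact fun x _ => ⟨Set.univ, ∅, isOpen_univ, genIdeal_empty, by simp, by simp⟩
  | inter s u _ _ ihs ihu =>
      rintro x ⟨hxs, hxu⟩
      obtain ⟨V, J, hV, hJ, hxVJ, hVJ⟩ := ihs x hxs
      obtain ⟨V', J', hV', hJ', hxVJ', hVJ'⟩ := ihu x hxu
      refine ⟨V ∩ V', J ∪ J', hV.inter hV', genIdeal_union hJ hJ',
        ⟨⟨hxVJ.1, hxVJ'.1⟩, ?_⟩, ?_⟩
      · rintro (h | h); exacts [hxVJ.2 h, hxVJ'.2 h]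
      · rintro y ⟨⟨hy1, hy2⟩, hy3⟩
        exact ⟨hVJ ⟨hy1, fun h => hy3 (Or.inl h)⟩, hVJ' ⟨hy2, fun h => hy3 (Or.inr h)⟩⟩
  | sUnion S _ ih =>
      rintro x ⟨s, hs, hxs⟩
      obtain ⟨V, J, hV, hJ, hxVJ, hVJ⟩ := ih s hs x hxs
      exact ⟨V, J, hV, hJ, hxVJ, hVJ.trans (Set.subset_sUnion_of_mem hs)⟩

lemma star_isOpen {V : Set X} (hV : IsOpen V) : IsOpen[starTop (genIdeal A U)] V :=
  TopologicalSpace.GenerateOpen.basic V ⟨V, ∅, hV, genIdeal_empty, by simp⟩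

/-- interior w.r.t. the star topology of a `t`-closed set equals the `t`-interior. -/
lemma star_interior_closed (hA : Dense A) {C : Set X} (hC : IsClosed C) :
    @interior X (starTop (genIdeal A U)) C = interior C := by
  apply Set.Subset.antisymm
  · intro x hx
    obtain ⟨V, J, hV, hJ, hxVJ, hVJ⟩ :=
      star_basis (isOpen_interior' (starTop (genIdeal A U)) (s := C)) x hx
    have hVA : V ∩ A ⊆ C := by
      intro y hy
      have hy' : y ∈ V \ J := ⟨hy.1, fun h => (genIdeal_disj hJ).le_bot ⟨h, hy.2⟩⟩
      exact interior_subset' (starTop (genIdeal A U)) (hVJ hy')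
    have hVC : V ⊆ C := (hA.open_subset_closure_inter hV).trans <|
      (closure_mono hVA).trans hC.closure_subset
    exact interior_maximal hVC hV hxVJ.1
  · exact interior_maximal' (starTop (genIdeal A U)) interior_subset
      (star_isOpen isOpen_interior)

/-- closure w.r.t. the star topology of a `t`-open set equals the `t`-closure. -/
lemma star_closure_open (hA : Dense A) {V : Set X} (hV : IsOpen V) :
    @closure X (starTop (genIdeal A U)) V = closure V := by
  apply Set.Subset.antisymm
  · exact closure_minimal' (starTop (genIdeal A U)) subset_closure
      (isClosed_of_compl' _ (star_isOpen isClosed_closure.isOpen_compl))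
  · have h1 : closure V ⊆ closure (V ∩ A) :=
      (closure_mono (hA.open_subset_closure_inter hV)).trans closure_closure.subset
    refine h1.trans ?_
    intro x hx
    rw [mem_closure_iff' (starTop (genIdeal A U))]
    intro G hG hxG
    obtain ⟨W, J, hW, hJ, hxWJ, hWJ⟩ := star_basis hG x hxG
    obtain ⟨y, hyW, hyV, hyA⟩ := (mem_closure_iff.1 hx) W hW hxWJ.1
    exact ⟨y, hWJ ⟨hyW, fun h => (genIdeal_disj hJ).le_bot ⟨h, hyA⟩⟩, hyV⟩

/-- closure w.r.t. the star topology of a star-open set equals `closure (G ∩ A)`. -/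
lemma star_closure_starOpen (hA : Dense A) {G : Set X}
    (hG : IsOpen[starTop (genIdeal A U)] G) :
    @closure X (starTop (genIdeal A U)) G = closure (G ∩ A) := by
  apply Set.Subset.antisymm
  · have h1 : G ⊆ @closure X (starTop (genIdeal A U)) (G ∩ A) := by
      intro x hx
      rw [mem_closure_iff' (starTop (genIdeal A U))]
      intro O hO hxO
      have hOG : IsOpen[starTop (genIdeal A U)] (O ∩ G) :=
        isOpen_inter' (starTop (genIdeal A U)) hO hG
      obtain ⟨V, J, hV, hJ, hxVJ, hVJ⟩ := star_basis hOG x ⟨hxO, hx⟩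
      have hVA : (V ∩ A).Nonempty :=
        closure_nonempty_iff.mp ⟨x, hA.open_subset_closure_inter hV hxVJ.1⟩
      obtain ⟨y, hyV, hyA⟩ := hVA
      have hyVJ : y ∈ V \ J := ⟨hyV, fun h => (genIdeal_disj hJ).le_bot ⟨h, hyA⟩⟩
      exact ⟨y, (hVJ hyVJ).1, (hVJ hyVJ).2, hyA⟩
    have h2 : @closure X (starTop (genIdeal A U)) (G ∩ A) ⊆ closure (G ∩ A) :=
      closure_minimal' (starTop (genIdeal A U)) subset_closure
        (isClosed_of_compl' _ (star_isOpen isClosed_closure.isOpen_compl))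
    exact (closure_minimal' (starTop (genIdeal A U)) h1
      (isClosed_closure' (starTop (genIdeal A U)))).trans h2
  · intro x hx
    rw [mem_closure_iff' (starTop (genIdeal A U))]
    intro O hO hxO
    obtain ⟨W, J, hW, hJ, hxWJ, hWJ⟩ := star_basis hO x hxO
    obtain ⟨y, hyW, hyG, hyA⟩ := (mem_closure_iff.1 hx) W hW hxWJ.1
    exact ⟨y, hWJ ⟨hyW, fun h => (genIdeal_disj hJ).le_bot ⟨h, hyA⟩⟩, hyG⟩

lemma intcl_idem {S : Set X} :
    interior (closure (interior (closure S))) = interior (closure S) := by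
  apply Set.Subset.antisymm
  · exact interior_mono (closure_minimal interior_subset isClosed_closure)
  · exact interior_maximal subset_closure isOpen_interior

lemma RO_eq (hA : Dense A) :
    {W : Set X | W = interior (closure W)} =
      {W : Set X | W = @interior X (starTop (genIdeal A U))
        (@closure X (starTop (genIdeal A U)) W)} := by
  ext W
  simp only [Set.mem_setOf_eq]
  constructor
  · intro hW
    have hWo : IsOpen W := by rw [hW]; exact isOpen_interior
    rw [star_closure_open hA hWo, star_interior_closed hA isClosed_closure]
    exact hW
  · intro hW
    have hWo : IsOpen[starTop (genIdeal A U)] W := by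
      rw [hW]; exact isOpen_interior' (starTop (genIdeal A U))
    have h2 : W = interior (closure (W ∩ A)) := by
      conv_lhs => rw [hW]
      rw [star_closure_starOpen hA hWo]
      exact star_interior_closed hA isClosed_closure
    calc W = interior (closure (W ∩ A)) := h2
      _ = interior (closure (interior (closure (W ∩ A)))) := intcl_idem.symm
      _ = interior (closure W) := by rw [← h2]

end Aux

theorem stmt5 {X : Type*} [t : TopologicalSpace X] (A : Set X) (hA : Dense A)
    (U : X → Set X)
    (hUopen : ∀ x ∈ A \ interior A, IsOpen (U x))
    (hUmem : ∀ x ∈ A \ interior A, x ∈ U x) :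
    semireg t = semireg (starTop (genIdeal A U)) := by
  unfold semireg
  exact congrArg generateFrom (RO_eq (U := U) hA)
end

section
/- Let (X,τ) be a topological space and A ⊆ X a set that is not preopen in τ (i.e. A ⊄ interior(closure(A))). For each x ∈ A \ interior(A) let U_x be an open set with x ∈ U_x, let I_A be the ideal generated by {U_x \ A : x ∈ A \ interior(A)}, and let τ* be the topology generated by {V \ I : V ∈ τ, I ∈ I_A}. Then (X,τ*) is not connected: there exists a subset of X that is simultaneously open and closed in τ*, nonempty, and different from X. -/
open TopologicalSpace Set Topology

theorem stmt6 {X : Type*} [TopologicalSpace X] (A : Set X)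
    (hA : ¬ A ⊆ interior (closure A))
    (U : X → Set X)
    (hUopen : ∀ x ∈ A \ interior A, IsOpen (U x))
    (hUmem : ∀ x ∈ A \ interior A, x ∈ U x) :
    ∃ B : Set X, IsOpen[starTop (genIdeal A U)] B ∧ IsClosed[starTop (genIdeal A U)] B ∧
      B ≠ ∅ ∧ B ≠ univ := by
  -- pick a witness x₀ ∈ A with x₀ ∉ interior (closure A)
  obtain ⟨x₀, hx₀A, hx₀⟩ : ∃ x ∈ A, x ∉ interior (closure A) := by
    by_contra h
    push_neg at h
    exact hA h
  have hx₀' : x₀ ∈ A \ interior A := by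
    refine ⟨hx₀A, fun h => hx₀ (interior_mono subset_closure h)⟩
  have hUo := hUopen x₀ hx₀'
  have hUm := hUmem x₀ hx₀'
  set B : Set X := U x₀ \ closure A with hBdef
  -- B belongs to the ideal
  have hBI : B ∈ genIdeal A U := by
    refine ⟨{x₀}, by simpa using hx₀', ?_⟩
    intro y hy
    simp only [Finset.mem_singleton, mem_iUnion]
    exact ⟨x₀, rfl, hy.1, fun hyA => hy.2 (subset_closure hyA)⟩
  refine ⟨B, ?_, ?_, ?_, ?_⟩
  · -- open: B = B \ ∅ with B τ-open and ∅ in the ideal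
    apply TopologicalSpace.GenerateOpen.basic
    refine ⟨B, ∅, hUo.sdiff isClosed_closure, ⟨∅, by simp⟩, by simp⟩
  · -- closed: complement = univ \ B with B in the ideal
    refine @IsClosed.mk X (starTop (genIdeal A U)) B ?_
    apply TopologicalSpace.GenerateOpen.basic
    exact ⟨univ, B, isOpen_univ, hBI, (compl_eq_univ_diff B)⟩
  · -- nonempty: otherwise U x₀ ⊆ closure A, so x₀ ∈ interior (closure A)
    intro h
    apply hx₀
    have hsub : U x₀ ⊆ closure A := by
      intro y hy
      by_contra hyc
      exact (eq_empty_iff_forall_notMem.mp h y) ⟨hy, hyc⟩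
    exact interior_maximal hsub hUo hUm
  · -- proper: x₀ ∈ closure A so x₀ ∉ B
    intro h
    have : x₀ ∈ B := h ▸ mem_univ x₀
    exact this.2 (subset_closure hx₀A)
end

section
/- Let (X,τ) be a topological space, A ⊆ X, and for each x ∈ A \ interior(A) let U_x be an open set with x ∈ U_x; let I_A be the ideal generated by {U_x \ A : x ∈ A \ interior(A)}. If the only open set of τ belonging to I_A is the empty set (τ ∩ I_A = {∅}), then A is preopen, i.e. A ⊆ interior(closure(A)). -/
open TopologicalSpace Set Topology

theorem stmt8 {X : Type*} [TopologicalSpace X] (A : Set X) (U : X → Set X)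
    (hUopen : ∀ x ∈ A \ interior A, IsOpen (U x))
    (hUmem : ∀ x ∈ A \ interior A, x ∈ U x)
    (h : {S : Set X | IsOpen S} ∩ genIdeal A U = {∅}) :
    A ⊆ interior (closure A) := by
  intro x hx
  by_cases hxi : x ∈ interior A
  · exact interior_mono subset_closure hxi
  have hxd : x ∈ A \ interior A := ⟨hx, hxi⟩
  have hVopen : IsOpen (U x \ closure A) :=
    (hUopen x hxd).sdiff isClosed_closure
  have hVideal : U x \ closure A ∈ genIdeal A U := by
    refine ⟨{x}, by simpa using hxd, ?_⟩
    intro y hy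
    simp only [Finset.mem_singleton, mem_iUnion]
    exact ⟨x, rfl, hy.1, fun hyA => hy.2 (subset_closure hyA)⟩
  have hVempty : U x \ closure A = ∅ := by
    have : U x \ closure A ∈ ({∅} : Set (Set X)) := h ▸ ⟨hVopen, hVideal⟩
    simpa using this
  have hsub : U x ⊆ closure A := by
    intro y hy
    by_contra hyc
    exact absurd (hVempty ▸ ⟨hy, hyc⟩ : y ∈ (∅ : Set X)) (notMem_empty y)
  exact mem_interior.mpr ⟨U x, hsub, hUopen x hxd, hUmem x hxd⟩
end

section
/- Let (X,τ) be a topological space and A ⊆ X a preopen set (A ⊆ interior(closure(A))). For each x ∈ A \ interior(A) let U_x be an open set with x ∈ U_x and U_x ⊆ interior(closure(A)), and let I_A be the ideal generated by {U_x \ A : x ∈ A \ interior(A)}. Then the only open set of τ belonging to I_A is the empty set (τ ∩ I_A = {∅}). -/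
open TopologicalSpace Set Topology

theorem stmt9 {X : Type*} [TopologicalSpace X] (A : Set X)
    (hA : A ⊆ interior (closure A))
    (U : X → Set X)
    (hUopen : ∀ x ∈ A \ interior A, IsOpen (U x))
    (hUmem : ∀ x ∈ A \ interior A, x ∈ U x)
    (hUsub : ∀ x ∈ A \ interior A, U x ⊆ interior (closure A)) :
    {S : Set X | IsOpen S} ∩ genIdeal A U = {∅} := by
  ext S
  simp only [Set.mem_inter_iff, Set.mem_setOf_eq, Set.mem_singleton_iff]
  constructor
  · rintro ⟨hSopen, F, hF, hsub⟩
    -- S ⊆ closure A \ A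
    have h1 : S ⊆ closure A \ A := by
      intro y hy
      obtain ⟨i, hiF, hyU, hyA⟩ := Set.mem_iUnion₂.mp (hsub hy)
      exact ⟨interior_subset (hUsub i (hF hiF) hyU), hyA⟩
    -- S open and disjoint from A ⇒ disjoint from closure A
    have h2 : A ⊆ Sᶜ := fun y hy hyS => (h1 hyS).2 hy
    have h3 : closure A ⊆ Sᶜ := closure_minimal h2 hSopen.isClosed_compl
    ext y
    simp only [Set.mem_empty_iff_false, iff_false]
    intro hy
    exact h3 (h1 hy).1 hy
  · rintro rfl
    exact ⟨isOpen_empty, ∅, by simp, by simp⟩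
end

section
/- Let (X,τ) be a topological space and A ⊆ X a preopen set (A ⊆ interior(closure(A))). For each x ∈ A \ interior(A) let U_x be an open set with x ∈ U_x and U_x ⊆ interior(closure(A)), let I_A be the ideal generated by {U_x \ A : x ∈ A \ interior(A)}, and let τ* be the topology generated by {V \ I : V ∈ τ, I ∈ I_A}. Then the semiregularization of τ equals the semiregularization of τ*, i.e. the topology generated by the regular open sets of τ equals the topology generated by the regular open sets of τ*. -/
open TopologicalSpace Set Topology

section Aux

variable {X : Type*} [t : TopologicalSpace X] (I : Set (Set X))

lemma starTop_basis (h0 : ∅ ∈ I) (hU : ∀ J ∈ I, ∀ K ∈ I, J ∪ K ∈ I) :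
    @TopologicalSpace.IsTopologicalBasis X (starTop I)
      {s | ∃ V J, IsOpen V ∧ J ∈ I ∧ s = V \ J} := by
  refine @TopologicalSpace.IsTopologicalBasis.mk X (starTop I) _ ?_ ?_ rfl
  · rintro s ⟨V, J, hV, hJ, rfl⟩ s' ⟨V', J', hV', hJ', rfl⟩ x hx
    refine ⟨(V ∩ V') \ (J ∪ J'), ⟨V ∩ V', J ∪ J', hV.inter hV', hU _ hJ _ hJ', rfl⟩,
      ⟨⟨hx.1.1, hx.2.1⟩, fun h => h.elim hx.1.2 hx.2.2⟩,
      fun y hy => ⟨⟨hy.1.1, fun h => hy.2 (Or.inl h)⟩, ⟨hy.1.2, fun h => hy.2 (Or.inr h)⟩⟩⟩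
  · apply eq_univ_of_univ_subset
    rintro x -
    exact ⟨univ, ⟨univ, ∅, isOpen_univ, h0, by simp⟩, by simp⟩

lemma semireg_starTop (h0 : ∅ ∈ I) (hU : ∀ J ∈ I, ∀ K ∈ I, J ∪ K ∈ I)
    (hcod : ∀ J ∈ I, interior J = ∅) :
    semireg t = semireg (starTop I) := by
  have hB := starTop_basis I h0 hU
  -- every t-open set is starTop-open
  have hopen : ∀ V : Set X, IsOpen V → IsOpen[starTop I] V := by
    intro V hV
    exact TopologicalSpace.GenerateOpen.basic _ ⟨V, ∅, hV, h0, by simp⟩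
  -- nonempty open sets are not inside members of I
  have hne : ∀ (O : Set X), IsOpen O → O.Nonempty → ∀ J ∈ I, (O \ J).Nonempty := by
    intro O hO hOne J hJ
    rw [Set.nonempty_iff_ne_empty]
    intro h
    have h1 : O ⊆ J := fun x hx => by
      by_contra hxJ
      exact (Set.eq_empty_iff_forall_notMem.mp h) x ⟨hx, hxJ⟩
    have h2 : O ⊆ interior J := interior_maximal h1 hO
    rw [hcod J hJ] at h2
    exact hOne.ne_empty (Set.subset_empty_iff.mp h2)
  -- closures agree on starTop-open sets
  have hcl : ∀ G : Set X, IsOpen[starTop I] G →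
      @closure X (starTop I) G = closure G := by
    intro G hG
    apply Set.Subset.antisymm
    · -- finer topology: smaller closure
      intro x hx
      rw [mem_closure_iff]
      intro O hO hxO
      exact (@mem_closure_iff X (starTop I) _ _).mp hx O (hopen O hO) hxO
    · intro x hx
      rw [@mem_closure_iff X (starTop I) _ _]
      intro N hN hxN
      rcases (@TopologicalSpace.IsTopologicalBasis.mem_nhds_iff X (starTop I) _ _ _ hB).mp (@IsOpen.mem_nhds X (starTop I) _ _ hN hxN) with
        ⟨s, ⟨V, K, hV, hK, rfl⟩, hxs, hsN⟩
      -- x ∈ V \ K ⊆ N; V meets G since x ∈ closure G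
      rcases (mem_closure_iff.mp hx) V hV hxs.1 with ⟨y, hyV, hyG⟩
      -- y ∈ G starTop-open: find basic V' \ K' ∋ y inside G
      rcases (@TopologicalSpace.IsTopologicalBasis.mem_nhds_iff X (starTop I) _ _ _ hB).mp (@IsOpen.mem_nhds X (starTop I) _ _ hG hyG) with
        ⟨s', ⟨V', K', hV', hK', rfl⟩, hys, hsG⟩
      have hVV' : ((V ∩ V') \ (K ∪ K')).Nonempty :=
        hne (V ∩ V') (hV.inter hV') ⟨y, hyV, hys.1⟩ _ (hU _ hK _ hK')
      rcases hVV' with ⟨z, hz1, hz2⟩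
      refine ⟨z, hsN ⟨hz1.1, fun h => hz2 (Or.inl h)⟩, hsG ⟨hz1.2, fun h => hz2 (Or.inr h)⟩⟩
  -- interiors agree on t-closed sets
  have hint : ∀ C : Set X, IsClosed C →
      @interior X (starTop I) C = interior C := by
    intro C hC
    apply Set.Subset.antisymm
    · intro x hx
      rcases (@TopologicalSpace.IsTopologicalBasis.mem_nhds_iff X (starTop I) _ _ _ hB).mp
        (@IsOpen.mem_nhds X (starTop I) _ _ (@isOpen_interior X (starTop I) C) hx) with
        ⟨s, ⟨V, K, hV, hK, rfl⟩, hxs, hsC⟩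
      have hVC : V ⊆ C := by
        intro v hv
        by_contra hvC
        rcases hne (V ∩ Cᶜ) (hV.inter hC.isOpen_compl) ⟨v, hv, hvC⟩ K hK with ⟨z, hz1, hz2⟩
        have h6 : @interior X (starTop I) C ⊆ C := @interior_subset X (starTop I) C
        exact hz1.2 (h6 (hsC ⟨hz1.1, hz2⟩))
      exact mem_interior.mpr ⟨V, hVC.trans (by intro a ha; exact ha), hV, hxs.1⟩
    · intro x hx
      have h5 : interior C ⊆ @interior X (starTop I) C :=
        @interior_maximal X (starTop I) C (interior C) interior_subset
          (hopen _ isOpen_interior)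
      exact h5 hx
  -- now the main equality
  have hVC : ∀ C : Set X, interior C ⊆ C := fun C => interior_subset
  unfold semireg
  congr 1
  ext W
  simp only [Set.mem_setOf_eq]
  constructor
  · intro hW
    have hWopen : IsOpen W := hW ▸ isOpen_interior
    have h1 : @closure X (starTop I) W = closure W := hcl W (hopen W hWopen)
    rw [h1, hint _ isClosed_closure]
    exact hW
  · intro hW
    have hWopen : IsOpen[starTop I] W := hW ▸ @isOpen_interior X (starTop I) _
    rw [hcl W hWopen, hint _ isClosed_closure] at hW
    exact hW

end Aux

theorem stmt10 {X : Type*} [t : TopologicalSpace X] (A : Set X)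
    (hA : A ⊆ interior (closure A))
    (U : X → Set X)
    (hUopen : ∀ x ∈ A \ interior A, IsOpen (U x))
    (hUmem : ∀ x ∈ A \ interior A, x ∈ U x)
    (hUsub : ∀ x ∈ A \ interior A, U x ⊆ interior (closure A)) :
    semireg t = semireg (starTop (genIdeal A U)) := by
  classical
  apply semireg_starTop
  · exact ⟨∅, by simp, by simp⟩
  · rintro J ⟨F, hF, hJ⟩ K ⟨G, hG, hK⟩
    refine ⟨F ∪ G, by rw [Finset.coe_union]; exact Set.union_subset hF hG, ?_⟩
    rintro x (hx | hx)
    · rcases Set.mem_iUnion₂.mp (hJ hx) with ⟨i, hi, hxi⟩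
      exact Set.mem_iUnion₂.mpr ⟨i, Finset.mem_union_left _ hi, hxi⟩
    · rcases Set.mem_iUnion₂.mp (hK hx) with ⟨i, hi, hxi⟩
      exact Set.mem_iUnion₂.mpr ⟨i, Finset.mem_union_right _ hi, hxi⟩
  · rintro J ⟨F, hF, hJ⟩
    -- interior J = ∅
    rw [← Set.subset_empty_iff]
    have hJsub : J ⊆ interior (closure A) \ A := by
      intro x hx
      rcases Set.mem_iUnion₂.mp (hJ hx) with ⟨i, hi, hxi⟩
      exact ⟨hUsub i (hF hi) hxi.1, hxi.2⟩
    intro x hx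
    -- interior J is open, ⊆ closure A, disjoint from A
    have hGsub : interior J ⊆ closure A :=
      (interior_mono hJsub).trans ((interior_mono (Set.diff_subset)).trans
        (by rw [interior_interior]; exact interior_subset))
    have hdisj : interior J ∩ A = ∅ := by
      rw [Set.eq_empty_iff_forall_notMem]
      rintro y ⟨hy1, hy2⟩
      exact (hJsub (interior_subset hy1)).2 hy2
    have hdisj' : interior J ∩ closure A = ∅ := by
      have hA' : A ⊆ (interior J)ᶜ := by
        intro a ha
        intro hc
        exact (Set.eq_empty_iff_forall_notMem.mp hdisj) a ⟨hc, ha⟩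
      have := closure_minimal hA' isOpen_interior.isClosed_compl
      rw [Set.eq_empty_iff_forall_notMem]
      rintro y ⟨hy1, hy2⟩
      exact this hy2 hy1
    exact (Set.eq_empty_iff_forall_notMem.mp hdisj') x ⟨hx, hGsub hx⟩
end

section
/- Let (X,τ) be a connected topological space and A ⊆ X a preopen set (A ⊆ interior(closure(A))). Let I be the principal ideal of all subsets of interior(closure(A)) \ A, and let τ* be the topology on X generated by {V \ I : V ∈ τ, I ⊆ interior(closure(A)) \ A}. Then (X,τ*) is connected. -/
open TopologicalSpace Set Topology

lemma starTop_basis_s11 {X : Type*} [TopologicalSpace X] (D : Set X) {U : Set X}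
    (hU : (starTop {S : Set X | S ⊆ D}).IsOpen U) :
    ∀ x ∈ U, ∃ V J, IsOpen V ∧ J ⊆ D ∧ x ∈ V \ J ∧ V \ J ⊆ U := by
  induction hU with
  | basic s hs =>
    obtain ⟨V, J, hV, hJ, rfl⟩ := hs
    exact fun x hx => ⟨V, J, hV, hJ, hx, subset_rfl⟩
  | univ => exact fun x _ => ⟨univ, ∅, isOpen_univ, empty_subset _, ⟨trivial, notMem_empty x⟩,
      subset_univ _⟩
  | inter s t hs ht ihs iht =>
    rintro x ⟨hxs, hxt⟩
    obtain ⟨V1, J1, hV1, hJ1, hx1, h1⟩ := ihs x hxs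
    obtain ⟨V2, J2, hV2, hJ2, hx2, h2⟩ := iht x hxt
    refine ⟨V1 ∩ V2, J1 ∪ J2, hV1.inter hV2, union_subset hJ1 hJ2,
      ⟨⟨hx1.1, hx2.1⟩, ?_⟩, fun z hz => ⟨h1 ⟨hz.1.1, fun h => hz.2 (Or.inl h)⟩,
        h2 ⟨hz.1.2, fun h => hz.2 (Or.inr h)⟩⟩⟩
    rintro (h | h)
    · exact hx1.2 h
    · exact hx2.2 h
  | sUnion S hS ih =>
    rintro x ⟨s, hsS, hxs⟩
    obtain ⟨V, J, hV, hJ, hx, h⟩ := ih s hsS x hxs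
    exact ⟨V, J, hV, hJ, hx, h.trans (subset_sUnion_of_mem hsS)⟩

lemma interior_closure_diff_empty {X : Type*} [TopologicalSpace X] (A : Set X) :
    interior (closure A \ A) = ∅ := by
  by_contra h
  obtain ⟨x, hx⟩ := nonempty_iff_ne_empty.2 h
  have h1 : x ∈ closure A := (interior_subset hx).1
  have h2 : interior (closure A \ A) ∩ A = ∅ := by
    ext y; simp only [mem_inter_iff, mem_empty_iff_false, iff_false]
    rintro ⟨hy, hyA⟩; exact (interior_subset hy).2 hyA
  have := mem_closure_iff.1 h1 _ isOpen_interior hx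
  rw [h2] at this
  exact this.ne_empty rfl

lemma star_aux {X : Type*} [TopologicalSpace X] (A : Set X) {s t : Set X}
    (hs : (starTop {S : Set X | S ⊆ interior (closure A) \ A}).IsOpen s)
    (ht : (starTop {S : Set X | S ⊆ interior (closure A) \ A}).IsOpen t)
    (hst : s ∩ t = ∅) {x : X} (hx : x ∈ s) (hx' : x ∈ closure t) : False := by
  set D := interior (closure A) \ A with hD
  obtain ⟨V, J, hV, hJ, hxV, hVs⟩ := starTop_basis_s11 D hs x hx
  obtain ⟨y, hyV, hyt⟩ := mem_closure_iff.1 hx' V hV hxV.1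
  obtain ⟨W, K, hW, hK, hyW, hWt⟩ := starTop_basis_s11 D ht y hyt
  have hsub : V ∩ W ⊆ closure A \ A := by
    intro z hz
    have hzD : z ∈ D := by
      by_cases hzJ : z ∈ J
      · exact hJ hzJ
      by_cases hzK : z ∈ K
      · exact hK hzK
      have hzs : z ∈ s := hVs ⟨hz.1, hzJ⟩
      have hzt : z ∈ t := hWt ⟨hz.2, hzK⟩
      exact absurd (hst ▸ (⟨hzs, hzt⟩ : z ∈ s ∩ t)) (notMem_empty z)
    exact ⟨interior_subset hzD.1, hzD.2⟩
  have : y ∈ interior (closure A \ A) :=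
    interior_maximal hsub (hV.inter hW) ⟨hyV, hyW.1⟩
  rw [interior_closure_diff_empty] at this
  exact this

theorem stmt11 {X : Type*} [TopologicalSpace X] [ConnectedSpace X] (A : Set X)
    (hA : A ⊆ interior (closure A)) :
    @ConnectedSpace X (starTop {S : Set X | S ⊆ interior (closure A) \ A}) := by
  refine @ConnectedSpace.mk X (starTop {S : Set X | S ⊆ interior (closure A) \ A})
    (@PreconnectedSpace.mk X (starTop {S : Set X | S ⊆ interior (closure A) \ A}) ?_)
    ⟨Classical.arbitrary X⟩
  rw [@isPreconnected_iff_subset_of_disjoint X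
    (starTop {S : Set X | S ⊆ interior (closure A) \ A})]
  intro u v hu hv hcov hdisj
  by_contra hcon
  push_neg at hcon
  obtain ⟨hnu, hnv⟩ := hcon
  obtain ⟨a, _, ha⟩ := not_subset.1 hnv
  obtain ⟨b, _, hb⟩ := not_subset.1 hnu
  have hav : a ∈ u := (hcov (mem_univ a)).resolve_right ha
  have hbu : b ∈ v := (hcov (mem_univ b)).resolve_left hb
  have huv : u ∩ v = ∅ := by rw [← univ_inter (u ∩ v)]; exact hdisj
  have hcl : (closure u ∩ closure v).Nonempty := by
    by_contra h
    rw [not_nonempty_iff_eq_empty] at h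
    have hsub : (closure v)ᶜ ⊆ u := by
      intro y hy
      rcases hcov (mem_univ y) with h1 | h1
      · exact h1
      · exact absurd (subset_closure h1) hy
    have hueq : u = (closure v)ᶜ := by
      apply Subset.antisymm _ hsub
      intro y hy hyc
      exact absurd (h ▸ (⟨subset_closure hy, hyc⟩ : y ∈ closure u ∩ closure v))
        (notMem_empty y)
    have hclopen : IsClopen u := by
      constructor
      · have : closure u ⊆ u := by
          intro y hy
          apply hsub
          intro hyc
          exact absurd (h ▸ (⟨hy, hyc⟩ : y ∈ closure u ∩ closure v)) (notMem_empty y)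
        exact isClosed_of_closure_subset this
      · rw [hueq]; exact isClosed_closure.isOpen_compl
    rcases isClopen_iff.1 hclopen with h1 | h1
    · exact absurd (h1 ▸ hav) (notMem_empty a)
    · have : b ∈ u := h1 ▸ mem_univ b
      exact absurd (huv ▸ (⟨this, hbu⟩ : b ∈ u ∩ v)) (notMem_empty b)
  obtain ⟨x, hxu, hxv⟩ := hcl
  rcases hcov (mem_univ x) with hx | hx
  · exact star_aux A hu hv huv hx hxv
  · exact star_aux A hv hu (by rw [inter_comm]; exact huv) hx hxu
end

section
/- Let (X,τ) be a connected topological space and A ⊆ X a preopen set (A ⊆ interior(closure(A))). For each x ∈ A \ interior(A) let U_x be an open set with x ∈ U_x and U_x ⊆ interior(closure(A)), let I_A be the ideal generated by {U_x \ A : x ∈ A \ interior(A)}, and let τ* be the topology generated by {V \ I : V ∈ τ, I ∈ I_A}. Then (X,τ*) is connected. -/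
open TopologicalSpace Set Topology

theorem stmt12 {X : Type*} [TopologicalSpace X] [ConnectedSpace X] (A : Set X)
    (hA : A ⊆ interior (closure A))
    (U : X → Set X)
    (hUopen : ∀ x ∈ A \ interior A, IsOpen (U x))
    (hUmem : ∀ x ∈ A \ interior A, x ∈ U x)
    (hUsub : ∀ x ∈ A \ interior A, U x ⊆ interior (closure A)) :
    @ConnectedSpace X (starTop (genIdeal A U)) := by
  -- Every member of the ideal has empty interior.
  have hcodense : ∀ I ∈ genIdeal A U, interior I = ∅ := by
    rintro I ⟨F, hF, hsub⟩
    have h1 : I ⊆ closure A \ A := by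
      intro y hy
      obtain ⟨s, ⟨x, rfl⟩, hy2⟩ := hsub hy
      simp only [mem_iUnion, mem_diff, exists_prop] at hy2
      obtain ⟨hxF, hyU, hyA⟩ := hy2
      exact ⟨interior_subset (hUsub x (hF hxF) hyU), hyA⟩
    have h2 : interior (closure A \ A) = ∅ := by
      have hO : interior (closure A \ A) ⊆ closure A \ A := interior_subset
      have hA' : A ⊆ (interior (closure A \ A))ᶜ := fun y hy hy' => (hO hy').2 hy
      have hcl : closure A ⊆ (interior (closure A \ A))ᶜ :=
        closure_minimal hA' isOpen_interior.isClosed_compl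
      exact eq_empty_iff_forall_notMem.2 fun y hy => hcl (hO hy).1 hy
    exact eq_empty_of_subset_empty (h2 ▸ interior_mono h1)
  -- The ideal is closed under unions.
  have hunion : ∀ I ∈ genIdeal A U, ∀ J ∈ genIdeal A U, I ∪ J ∈ genIdeal A U := by
    classical
    rintro I ⟨F, hF, hI⟩ J ⟨G, hG, hJ⟩
    refine ⟨F ∪ G, ?_, ?_⟩
    · push_cast
      exact union_subset hF hG
    · refine union_subset (hI.trans ?_) (hJ.trans ?_) <;>
        refine iUnion₂_mono' fun x hx => ⟨x, ?_, subset_rfl⟩ <;>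
        simp_all [Finset.mem_union]
  have hempty : (∅ : Set X) ∈ genIdeal A U := ⟨∅, by simp, by simp⟩
  -- Extraction lemma: around every point of a τ*-open set there is a basic set V \ I.
  have hbase : ∀ u : Set X, @IsOpen X (starTop (genIdeal A U)) u → ∀ x ∈ u,
      ∃ V I, IsOpen V ∧ I ∈ genIdeal A U ∧ x ∈ V \ I ∧ V \ I ⊆ u := by
    intro u hu
    change GenerateOpen _ u at hu
    induction hu with
    | basic s hs =>
      obtain ⟨V, J, hV, hJ, rfl⟩ := hs
      exact fun x hx => ⟨V, J, hV, hJ, hx, subset_rfl⟩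
    | univ => exact fun x _ => ⟨univ, ∅, isOpen_univ, hempty, by simp, by simp⟩
    | inter s t hs ht ihs iht =>
      rintro x ⟨hxs, hxt⟩
      obtain ⟨V, I, hV, hI, hxVI, hVIs⟩ := ihs x hxs
      obtain ⟨W, J, hW, hJ, hxWJ, hWJt⟩ := iht x hxt
      refine ⟨V ∩ W, I ∪ J, hV.inter hW, hunion I hI J hJ,
        ⟨⟨hxVI.1, hxWJ.1⟩, fun h => h.elim hxVI.2 hxWJ.2⟩, fun y hy => ⟨?_, ?_⟩⟩
      · exact hVIs ⟨hy.1.1, fun h => hy.2 (Or.inl h)⟩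
      · exact hWJt ⟨hy.1.2, fun h => hy.2 (Or.inr h)⟩
    | sUnion S hS ih =>
      rintro x ⟨s, hsS, hxs⟩
      obtain ⟨V, I, hV, hI, hxVI, hVIs⟩ := ih s hsS x hxs
      exact ⟨V, I, hV, hI, hxVI, hVIs.trans (subset_sUnion_of_mem hsS)⟩
  refine @ConnectedSpace.mk X (starTop (genIdeal A U)) (@PreconnectedSpace.mk X (starTop (genIdeal A U)) ?_) inferInstance
  intro u v hu hv huv ⟨a, _, hau⟩ ⟨b, _, hbv⟩
  -- P, Q : τ-open "approximations" of u and v.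
  set P : Set X := {x | ∃ V I, IsOpen V ∧ I ∈ genIdeal A U ∧ x ∈ V ∧ V \ I ⊆ u} with hP
  set Q : Set X := {x | ∃ V I, IsOpen V ∧ I ∈ genIdeal A U ∧ x ∈ V ∧ V \ I ⊆ v} with hQ
  have hPopen : IsOpen P := by
    refine isOpen_iff_forall_mem_open.2 ?_
    rintro x ⟨V, I, hV, hI, hxV, hVI⟩
    exact ⟨V, fun y hy => ⟨V, I, hV, hI, hy, hVI⟩, hV, hxV⟩
  have hQopen : IsOpen Q := by
    refine isOpen_iff_forall_mem_open.2 ?_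
    rintro x ⟨V, I, hV, hI, hxV, hVI⟩
    exact ⟨V, fun y hy => ⟨V, I, hV, hI, hy, hVI⟩, hV, hxV⟩
  have hcover : (univ : Set X) ⊆ P ∪ Q := by
    intro x _
    rcases huv (mem_univ x) with hx | hx
    · obtain ⟨V, I, hV, hI, hxVI, hVIs⟩ := hbase u hu x hx
      exact Or.inl ⟨V, I, hV, hI, hxVI.1, hVIs⟩
    · obtain ⟨V, I, hV, hI, hxVI, hVIs⟩ := hbase v hv x hx
      exact Or.inr ⟨V, I, hV, hI, hxVI.1, hVIs⟩
  have haP : a ∈ P := by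
    obtain ⟨V, I, hV, hI, hxVI, hVIs⟩ := hbase u hu a hau
    exact ⟨V, I, hV, hI, hxVI.1, hVIs⟩
  have hbQ : b ∈ Q := by
    obtain ⟨V, I, hV, hI, hxVI, hVIs⟩ := hbase v hv b hbv
    exact ⟨V, I, hV, hI, hxVI.1, hVIs⟩
  obtain ⟨x, -, hxP, hxQ⟩ :=
    isPreconnected_univ P Q hPopen hQopen hcover ⟨a, mem_univ a, haP⟩ ⟨b, mem_univ b, hbQ⟩
  obtain ⟨V, I, hV, hI, hxV, hVIu⟩ := hxP
  obtain ⟨W, J, hW, hJ, hxW, hWJv⟩ := hxQ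
  -- V ∩ W is nonempty open; it cannot be contained in I ∪ J, which has empty interior.
  have hne : ((V ∩ W) \ (I ∪ J)).Nonempty := by
    by_contra h
    have hsub : V ∩ W ⊆ I ∪ J := fun y hy => by
      by_contra hy'
      exact h ⟨y, hy, hy'⟩
    have : x ∈ interior (I ∪ J) :=
      interior_maximal hsub (hV.inter hW) ⟨hxV, hxW⟩
    rw [hcodense (I ∪ J) (hunion I hI J hJ)] at this
    exact this
  obtain ⟨y, ⟨hyV, hyW⟩, hyIJ⟩ := hne
  exact ⟨y, mem_univ y, hVIu ⟨hyV, fun h => hyIJ (Or.inl h)⟩,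
    hWJv ⟨hyW, fun h => hyIJ (Or.inr h)⟩⟩
end
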